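/- A stream σ over a field k is rational (a quotient of polynomial streams under convolution product) if and only if the subspace of k^ω spanned by the set {σ, σ', σ'', ...} of all iterated tails of σ is finite dimensional. -/

import Mathlib

def conv {A : Type*} [Semiring A] (σ τ : ℕ → A) : ℕ → A :=
  fun n => ∑ i ∈ Finset.range (n + 1), σ i * τ (n - i)

def cst {A : Type*} [Semiring A] (a : A) : ℕ → A :=
  fun n => if n = 0 then a else 0

def Xs {A : Type*} [Semiring A] : ℕ → A :=
  fun n => if n = 1 then 1 else 0

def tl {A : Type*} (σ : ℕ → A) : ℕ → A :=
  fun n => σ (n + 1)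

/-- auxiliary lemmas -/
lemma conv_reflect {A : Type*} [Semiring A] (σ τ : ℕ → A) (n : ℕ) :
    conv σ τ n = ∑ j ∈ Finset.range (n + 1), σ (n - j) * τ j := by
  unfold conv
  rw [← Finset.sum_range_reflect]
  refine Finset.sum_congr rfl fun j hj => ?_
  simp only [Finset.mem_range] at hj
  have h1 : n + 1 - 1 - j = n - j := by omega
  have h2 : n - (n - j) = j := by omega
  rw [h1, h2]

lemma conv_trunc {k : Type*} [Field k] (σ τ : ℕ → k) (d n : ℕ) (hd : n ≥ d)
    (hτ : ∀ j, d < j → τ j = 0) :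
    conv σ τ n = ∑ j ∈ Finset.range (d + 1), σ (n - j) * τ j := by
  rw [conv_reflect]
  refine (Finset.sum_subset ?_ ?_).symm
  · intro x hx; simp only [Finset.mem_range] at *; omega
  · intro x _ hx
    simp only [Finset.mem_range] at hx
    rw [hτ x (by omega), mul_zero]

lemma tl_iter {A : Type*} (σ : ℕ → A) (i n : ℕ) : tl^[i] σ n = σ (n + i) := by
  induction i generalizing σ with
  | zero => simp
  | succ i ih =>
    rw [Function.iterate_succ_apply, ih]
    simp [tl, Nat.add_assoc]

lemma dir2 {k : Type*} [Field k] (σ : ℕ → k)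
    (h : FiniteDimensional k (Submodule.span k (Set.range fun n => tl^[n] σ))) :
    ∃ ρ τ : ℕ → k, (Function.support ρ).Finite ∧ (Function.support τ).Finite ∧
      τ 0 ≠ 0 ∧ conv σ τ = ρ := by
  classical
  set V := Submodule.span k (Set.range fun n => tl^[n] σ) with hV
  set N := Module.finrank k V with hN
  set f : Fin (N + 1) → V := fun i => ⟨tl^[(i : ℕ)] σ, Submodule.subset_span ⟨i, rfl⟩⟩ with hf
  have hnli : ¬ LinearIndependent k f := by
    intro hli
    have := hli.fintype_card_le_finrank
    simp [Fintype.card_fin] at this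
    exact lt_irrefl _ this
  obtain ⟨g, hg0, i0, hi0⟩ := Fintype.not_linearIndependent_iff.mp hnli
  -- stream identity
  have hsum : ∀ m, ∑ i : Fin (N + 1), g i * σ (m + (i : ℕ)) = 0 := by
    intro m
    have := congrArg (fun v : V => (v : ℕ → k) m) hg0
    simp only [Submodule.coe_sum, Submodule.coe_smul, Finset.sum_apply, Pi.smul_apply,
      smul_eq_mul, ZeroMemClass.coe_zero, Pi.zero_apply] at this
    simpa [hf, tl_iter] using this
  set c : ℕ → k := fun i => if hi : i < N + 1 then g ⟨i, hi⟩ else 0 with hc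
  set F : Finset (Fin (N + 1)) := Finset.univ.filter (fun i => g i ≠ 0) with hF
  have hFne : F.Nonempty := ⟨i0, by simp [hF, hi0]⟩
  set j := F.max' hFne with hj
  set d : ℕ := (j : ℕ) with hd
  have hcd : c d ≠ 0 := by
    have : j ∈ F := F.max'_mem hFne
    simp only [hF, Finset.mem_filter] at this
    simpa [hc, hd, j.isLt, Fin.eta, Nat.lt_succ_iff.mp j.isLt] using this.2
  have hctop : ∀ i, d < i → c i = 0 := by
    intro i hi
    by_cases h1 : i < N + 1
    · simp only [hc, dif_pos h1]
      by_contra hne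
      have : (⟨i, h1⟩ : Fin (N + 1)) ∈ F := by simp [hF, hne]
      have := F.le_max' _ this
      rw [← hj] at this
      simp only [Fin.le_def] at this
      omega
    · simp [hc, h1]
      intro h2; omega
  have hkey : ∀ m, ∑ i ∈ Finset.range (d + 1), c i * σ (m + i) = 0 := by
    intro m
    have h1 : ∑ i ∈ Finset.range (N + 1), c i * σ (m + i) = 0 := by
      rw [← Fin.sum_univ_eq_sum_range (fun i => c i * σ (m + i)) (N + 1)]
      rw [← hsum m]
      refine Finset.sum_congr rfl fun i _ => ?_
      simp [hc, i.isLt, Fin.eta]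
      intro h2; omega
    rw [← h1]
    refine Finset.sum_subset ?_ ?_
    · intro x hx
      simp only [Finset.mem_range] at *
      omega
    · intro x _ hx
      simp only [Finset.mem_range] at hx
      rw [hctop x (by omega), zero_mul]
  set τ : ℕ → k := fun l => if l ≤ d then c (d - l) else 0 with hτdef
  have hτ0 : τ 0 ≠ 0 := by simpa [hτdef] using hcd
  have hτtop : ∀ l, d < l → τ l = 0 := fun l hl => by simp [hτdef, Nat.not_le.mpr hl]
  have hρ0 : ∀ n, d ≤ n → conv σ τ n = 0 := by
    intro n hn
    rw [conv_trunc σ τ d n hn hτtop]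
    have : ∀ l ∈ Finset.range (d + 1), σ (n - l) * τ l = σ (n - l) * c (d - l) := by
      intro l hl
      simp only [Finset.mem_range] at hl
      rw [hτdef]
      simp [Nat.lt_succ_iff.mp hl]
    rw [Finset.sum_congr rfl this]
    rw [← Finset.sum_range_reflect (fun l => σ (n - l) * c (d - l)) (d + 1)]
    rw [← hkey (n - d)]
    refine Finset.sum_congr rfl fun l hl => ?_
    simp only [Finset.mem_range] at hl
    have e1 : n - (d + 1 - 1 - l) = n - d + l := by omega
    have e2 : d - (d + 1 - 1 - l) = l := by omega
    rw [e1, e2, mul_comm]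
  refine ⟨conv σ τ, τ, ?_, ?_, hτ0, rfl⟩
  · refine Set.Finite.subset (Set.finite_Iio d) ?_
    intro n hn
    simp only [Function.mem_support] at hn
    simp only [Set.mem_Iio]
    by_contra hge
    exact hn (hρ0 n (by omega))
  · refine Set.Finite.subset (Set.finite_Iic d) ?_
    intro l hl
    simp only [Function.mem_support] at hl
    by_contra hge
    exact hl (hτtop l (by simpa [Set.mem_Iic] using hge))

lemma bound_of_finite {A : Type*} [Zero A] (f : ℕ → A) (h : (Function.support f).Finite) :
    ∃ B, ∀ n, B ≤ n → f n = 0 := by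
  refine ⟨h.toFinset.sup id + 1, fun n hn => ?_⟩
  by_contra hne
  have hmem : n ∈ h.toFinset := by simpa [Function.mem_support] using hne
  have := Finset.le_sup (f := id) hmem
  simp only [id] at this
  omega

lemma dir1 {k : Type*} [Field k] (σ ρ τ : ℕ → k)
    (hρf : (Function.support ρ).Finite) (hτf : (Function.support τ).Finite)
    (hτ0 : τ 0 ≠ 0) (hconv : conv σ τ = ρ) :
    FiniteDimensional k (Submodule.span k (Set.range fun n => tl^[n] σ)) := by
  classical
  obtain ⟨B1, hB1⟩ := bound_of_finite ρ hρf
  obtain ⟨d, hdτ⟩ := bound_of_finite τ hτf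
  have hτtop : ∀ j, d < j → τ j = 0 := fun j hj => hdτ j (by omega)
  set N := B1 + d with hNdef
  -- recurrence for m > N
  have hrec : ∀ m, N < m →
      tl^[m] σ = ∑ i ∈ Finset.range d, (-(τ (i + 1) / τ 0)) • tl^[m - 1 - i] σ := by
    intro m hm
    funext p
    have hn : d ≤ p + m := by omega
    have hρ : conv σ τ (p + m) = 0 := by rw [hconv]; exact hB1 _ (by omega)
    rw [conv_trunc σ τ d (p + m) hn hτtop, Finset.sum_range_succ'] at hρ
    simp only [Nat.sub_zero] at hρ
    have hσn : σ (p + m) = ∑ i ∈ Finset.range d, (-(τ (i + 1) / τ 0)) * σ (p + m - (i + 1)) := by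
      apply mul_right_cancel₀ hτ0
      rw [Finset.sum_mul]
      have hterm : ∀ i ∈ Finset.range d,
          (-(τ (i + 1) / τ 0)) * σ (p + m - (i + 1)) * τ 0 = -(σ (p + m - (i + 1)) * τ (i + 1)) := by
        intro i _
        rw [mul_right_comm, neg_mul, neg_mul, div_mul_cancel₀ _ hτ0, neg_inj, mul_comm]
      rw [Finset.sum_congr rfl hterm, Finset.sum_neg_distrib]
      linear_combination hρ
    rw [tl_iter]
    rw [hσn]
    rw [Finset.sum_apply]
    refine Finset.sum_congr rfl fun i hi => ?_
    simp only [Finset.mem_range] at hi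
    rw [Pi.smul_apply, tl_iter, smul_eq_mul]
    congr 2
    omega
  set S : Set (ℕ → k) := (fun i => tl^[i] σ) '' Set.Iic N with hS
  have hSfin : S.Finite := (Set.finite_Iic N).image _
  have hclaim : ∀ m, tl^[m] σ ∈ Submodule.span k S := by
    intro m
    induction m using Nat.strong_induction_on with
    | _ m ih =>
      by_cases hm : m ≤ N
      · exact Submodule.subset_span ⟨m, hm, rfl⟩
      · rw [hrec m (by omega)]
        refine Submodule.sum_mem _ fun i hi => ?_
        exact Submodule.smul_mem _ _ (ih (m - 1 - i) (by omega))
  have heq : Submodule.span k (Set.range fun n => tl^[n] σ) = Submodule.span k S := by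
    refine le_antisymm ?_ ?_
    · rw [Submodule.span_le]
      rintro _ ⟨m, rfl⟩
      exact hclaim m
    · exact Submodule.span_mono (by rintro _ ⟨i, _, rfl⟩; exact ⟨i, rfl⟩)
  rw [heq]
  exact FiniteDimensional.span_of_finite k hSfin

theorem stmt14 {k : Type*} [Field k] (σ : ℕ → k) :
    (∃ ρ τ : ℕ → k, (Function.support ρ).Finite ∧ (Function.support τ).Finite ∧
      τ 0 ≠ 0 ∧ conv σ τ = ρ) ↔
    FiniteDimensional k (Submodule.span k (Set.range fun n => tl^[n] σ)) := by
  constructor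
  · rintro ⟨ρ, τ, h1, h2, h3, h4⟩
    exact dir1 σ ρ τ h1 h2 h3 h4
  · exact dir2 σ
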